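/- arXiv:1810.10168 — 7 statements merged into one kernel-verified Lean document; each statement's English description precedes it below -/
import Mathlib

section
/- Let m > 0 and define F : (0,∞) → ℝ by F(ρ) = 1 + m/(2ρ). Let ρ, c : [0,∞) → ℝ be differentiable functions such that for every s ≥ 0: ρ(s) > 0, 0 < c(s) ≤ 1, ρ'(s) = c(s)/F(ρ(s))², and c'(s) ≥ (√(1 − c(s)²)/(F(ρ(s))²·ρ(s)))·(√(1 − c(s)²) − m/(F(ρ(s))·ρ(s))). If c(0) > 1/√3 and ρ(0) > 3m, then ρ is strictly increasing on [0,∞), and c(s) > 1/√3 and ρ(s) > 3m for every s ≥ 0. -/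
open Real Set Filter Topology

/-- Tangent-angle barrier for the flow in the Schwarzschild manifold
(Proposition 5.1). With `F(ρ) = 1 + m/(2ρ)`, suppose along the flow line
`ρ' = c / F(ρ)²` and `c' ≥ (√(1−c²)/(F(ρ)²ρ))(√(1−c²) − m/(F(ρ)ρ))`, with
`0 < c ≤ 1` and `ρ > 0`. If `c(0) > 1/√3` and `ρ(0) > 3m`, then `ρ` is strictly
increasing on `[0,∞)` and `c(s) > 1/√3`, `ρ(s) > 3m` for all `s ≥ 0`. -/
theorem schwarzschild_tangent_angle_barrier
    (m : ℝ) (hm : 0 < m)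
    (ρ c : ℝ → ℝ)
    (hρpos : ∀ s, 0 ≤ s → 0 < ρ s)
    (hcpos : ∀ s, 0 ≤ s → 0 < c s)
    (hcle : ∀ s, 0 ≤ s → c s ≤ 1)
    (hρ' : ∀ s, 0 ≤ s → HasDerivAt ρ (c s / (1 + m / (2 * ρ s)) ^ 2) s)
    (hcdiff : ∀ s, 0 ≤ s → DifferentiableAt ℝ c s)
    (hc' : ∀ s, 0 ≤ s → deriv c s ≥
      (Real.sqrt (1 - c s ^ 2) / ((1 + m / (2 * ρ s)) ^ 2 * ρ s)) *
        (Real.sqrt (1 - c s ^ 2) - m / ((1 + m / (2 * ρ s)) * ρ s)))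
    (hc0 : c 0 > 1 / Real.sqrt 3)
    (hρ0 : ρ 0 > 3 * m) :
    StrictMonoOn ρ (Set.Ici 0) ∧
      ∀ s, 0 ≤ s → c s > 1 / Real.sqrt 3 ∧ ρ s > 3 * m := by
  have hF : ∀ s, 0 ≤ s → 0 < 1 + m / (2 * ρ s) := by
    intro s hs
    have := hρpos s hs
    positivity
  have hρcont : ContinuousOn ρ (Ici 0) := fun s hs =>
    ((hρ' s hs).continuousAt).continuousWithinAt
  have hccont : ContinuousOn c (Ici 0) := fun s hs =>
    ((hcdiff s hs).continuousAt).continuousWithinAt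
  have hmono : StrictMonoOn ρ (Ici 0) := by
    apply strictMonoOn_of_deriv_pos (convex_Ici 0) hρcont
    intro s hs
    rw [interior_Ici] at hs
    have hs0 : (0:ℝ) ≤ s := le_of_lt hs
    rw [(hρ' s hs0).deriv]
    have h1 := hF s hs0
    have h2 := hcpos s hs0
    positivity
  have hρ3m : ∀ s, 0 ≤ s → ρ s > 3 * m := by
    intro s hs
    rcases eq_or_lt_of_le hs with h | h
    · rwa [← h]
    · exact lt_trans hρ0 (hmono self_mem_Ici hs h)
  have hcbar : ∀ s, 0 ≤ s → c s > 1 / Real.sqrt 3 := by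
    by_contra h
    push_neg at h
    obtain ⟨t, ht0, htc⟩ := h
    set T : Set ℝ := {s | 0 ≤ s ∧ c s ≤ 1 / Real.sqrt 3} with hT
    have hTne : T.Nonempty := ⟨t, ht0, htc⟩
    have hTbdd : BddBelow T := ⟨0, fun x hx => hx.1⟩
    have hTclosed : IsClosed T := by
      have heq : T = Ici 0 ∩ c ⁻¹' (Iic (1 / Real.sqrt 3)) := by
        ext x
        simp only [hT, Set.mem_setOf_eq, Set.mem_inter_iff, Set.mem_Ici,
          Set.mem_preimage, Set.mem_Iic]
      rw [heq]
      exact hccont.preimage_isClosed_of_isClosed isClosed_Ici isClosed_Iic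
    set s₀ := sInf T with hs₀def
    have hs₀T : s₀ ∈ T := hTclosed.csInf_mem hTne hTbdd
    obtain ⟨hs₀0, hs₀c⟩ := hs₀T
    have hlt : ∀ s, 0 ≤ s → s < s₀ → 1 / Real.sqrt 3 < c s := by
      intro s hs hss
      by_contra hle
      push_neg at hle
      exact absurd (csInf_le hTbdd ⟨hs, hle⟩) (not_le_of_gt hss)
    have hs₀pos : 0 < s₀ := by
      rcases eq_or_lt_of_le hs₀0 with h | h
      · exfalso
        rw [← h] at hs₀c
        exact absurd hs₀c (not_le_of_gt hc0)
      · exact h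
    -- deriv c s₀ ≤ 0 from left difference quotients
    have hder := (hcdiff s₀ hs₀0).hasDerivAt
    have hslope : Tendsto (slope c s₀) (𝓝[≠] s₀) (𝓝 (deriv c s₀)) :=
      hasDerivAt_iff_tendsto_slope.mp hder
    have hslope' : Tendsto (slope c s₀) (𝓝[<] s₀) (𝓝 (deriv c s₀)) :=
      hslope.mono_left (nhdsWithin_mono _ (fun x hx => ne_of_lt hx))
    have hev : ∀ᶠ x in 𝓝[<] s₀, slope c s₀ x ≤ 0 := by
      filter_upwards [Ioo_mem_nhdsLT_of_mem (Set.mem_Ioc.mpr ⟨hs₀pos, le_refl s₀⟩)]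
      intro x hx
      have h1 : c s₀ < c x := lt_of_le_of_lt hs₀c (hlt x hx.1.le hx.2)
      rw [slope_def_field, div_eq_inv_mul]
      apply mul_nonpos_of_nonpos_of_nonneg
      · exact inv_nonpos.mpr (by linarith [hx.2])
      · linarith
    have hderle : deriv c s₀ ≤ 0 := le_of_tendsto hslope' hev
    -- deriv c s₀ > 0 from the differential inequality
    have hρ₀ := hρ3m s₀ hs₀0
    have hρ₀pos := hρpos s₀ hs₀0
    have hF₀ := hF s₀ hs₀0
    have hc₀pos := hcpos s₀ hs₀0
    -- c s₀ ^ 2 ≤ 1/3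
    have hsq3 : Real.sqrt 3 ^ 2 = 3 := Real.sq_sqrt (by norm_num)
    have hcsq : c s₀ ^ 2 ≤ 1 / 3 := by
      have h1 : c s₀ ^ 2 ≤ (1 / Real.sqrt 3) ^ 2 :=
        pow_le_pow_left₀ hc₀pos.le hs₀c 2
      calc c s₀ ^ 2 ≤ (1 / Real.sqrt 3) ^ 2 := h1
        _ = 1 / 3 := by rw [div_pow, one_pow, hsq3]
    have hsqrt13 : (1:ℝ) / 3 < Real.sqrt (1 - c s₀ ^ 2) := by
      rw [show ((1:ℝ)/3) = Real.sqrt ((1:ℝ)/9) by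
        rw [show ((1:ℝ)/9) = (1/3)^2 by norm_num, Real.sqrt_sq (by norm_num)]]
      apply Real.sqrt_lt_sqrt (by norm_num)
      linarith
    have hmF : m / ((1 + m / (2 * ρ s₀)) * ρ s₀) < 1 / 3 := by
      rw [div_lt_div_iff₀ (by positivity) (by norm_num)]
      have hd : 0 < m / (2 * ρ s₀) := by positivity
      nlinarith [mul_nonneg hd.le hρ₀pos.le]
    have hA : 0 < Real.sqrt (1 - c s₀ ^ 2) / ((1 + m / (2 * ρ s₀)) ^ 2 * ρ s₀) := by
      apply div_pos (by linarith) (by positivity)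
    have hB : 0 < Real.sqrt (1 - c s₀ ^ 2) - m / ((1 + m / (2 * ρ s₀)) * ρ s₀) := by
      linarith
    have := hc' s₀ hs₀0
    nlinarith [mul_pos hA hB]
  exact ⟨hmono, fun s hs => ⟨hcbar s hs, hρ3m s hs⟩⟩
end

section
/- Let m > 0 and define F : (0,∞) → ℝ by F(ρ) = 1 + m/(2ρ). Let ρ, c, K : [0,∞) → ℝ be differentiable functions such that for every s ≥ 0: ρ(s) > 0, ρ is nondecreasing, c(s) > 1/√3, and K'(s) ≥ (1/(ρ(s)·F(ρ(s))²))·(2·c(s)·K(s) − K(s)²/ρ(s) − m). If ρ(0) > 3m and K(0) > √3·m, then K(s) > √3·m for every s ≥ 0. -/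
/-- Principal-curvature barrier for the flow in the Schwarzschild manifold
(Proposition 5.1). With `F(ρ) = 1 + m/(2ρ)` and `K = κ̃ρ²`, suppose along the flow line
`ρ > 0`, `ρ` is nondecreasing, `c > 1/√3`, and
`K' ≥ (1/(ρ F(ρ)²))(2cK − K²/ρ − m)`. If `ρ(0) > 3m` and `K(0) > √3 m`, then
`K(s) > √3 m` for all `s ≥ 0`. -/
theorem schwarzschild_principal_curvature_barrier
    (m : ℝ) (hm : 0 < m)
    (ρ c K : ℝ → ℝ)
    (hρdiff : ∀ s, 0 ≤ s → DifferentiableAt ℝ ρ s)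
    (hcdiff : ∀ s, 0 ≤ s → DifferentiableAt ℝ c s)
    (hKdiff : ∀ s, 0 ≤ s → DifferentiableAt ℝ K s)
    (hρpos : ∀ s, 0 ≤ s → 0 < ρ s)
    (hρmono : MonotoneOn ρ (Set.Ici 0))
    (hc : ∀ s, 0 ≤ s → c s > 1 / Real.sqrt 3)
    (hK' : ∀ s, 0 ≤ s → deriv K s ≥
      (1 / (ρ s * (1 + m / (2 * ρ s)) ^ 2)) *
        (2 * c s * K s - K s ^ 2 / ρ s - m))
    (hρ0 : ρ 0 > 3 * m)
    (hK0 : K 0 > Real.sqrt 3 * m) :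
    ∀ s, 0 ≤ s → K s > Real.sqrt 3 * m := by
  by_contra hcon
  push_neg at hcon
  obtain ⟨s₀, hs₀, hKs₀⟩ := hcon
  set B : ℝ := Real.sqrt 3 * m with hBdef
  have hs3 : (Real.sqrt 3) ^ 2 = 3 := Real.sq_sqrt (by norm_num)
  have hs3pos : 0 < Real.sqrt 3 := Real.sqrt_pos.2 (by norm_num)
  have hBpos : 0 < B := mul_pos hs3pos hm
  set S : Set ℝ := Set.Ici 0 ∩ K ⁻¹' Set.Iic B with hSdef
  have hSne : S.Nonempty := ⟨s₀, hs₀, hKs₀⟩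
  have hSbdd : BddBelow S := ⟨0, fun x hx => hx.1⟩
  have hKcontOn : ContinuousOn K (Set.Ici 0) :=
    fun s hs => ((hKdiff s hs).continuousAt).continuousWithinAt
  have hSclosed : IsClosed S :=
    hKcontOn.preimage_isClosed_of_isClosed isClosed_Ici isClosed_Iic
  set t : ℝ := sInf S with htdef
  have htmem : t ∈ S := hSclosed.csInf_mem hSne hSbdd
  have ht0 : 0 ≤ t := htmem.1
  have hKtle : K t ≤ B := htmem.2
  have htpos : 0 < t := by
    rcases lt_or_eq_of_le ht0 with h | h
    · exact h
    · exfalso; rw [← h] at hKtle; exact absurd hKtle (not_le.2 hK0)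
  -- every point strictly below t with s ≥ 0 satisfies K s > B
  have hbelow : ∀ s, 0 ≤ s → s < t → B < K s := by
    intro s hs hst
    by_contra h
    push_neg at h
    exact absurd (csInf_le hSbdd ⟨hs, h⟩) (not_le.2 hst)
  -- K t ≥ B by limit from the left
  have hKtge : B ≤ K t := by
    have htend : Filter.Tendsto K (nhdsWithin t (Set.Iio t)) (nhds (K t)) :=
      ((hKdiff t ht0).continuousAt).continuousWithinAt
    refine ge_of_tendsto htend ?_
    filter_upwards [Ioo_mem_nhdsLT_of_mem (Set.mem_Ioc.2 ⟨htpos, le_refl t⟩)] with s hs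
    exact le_of_lt (hbelow s hs.1.le hs.2)
  have hKt : K t = B := le_antisymm hKtle hKtge
  -- derivative is strictly positive at t
  have hρt : 3 * m < ρ t := lt_of_lt_of_le hρ0 (hρmono (Set.self_mem_Ici) ht0 ht0)
  have hρtpos : 0 < ρ t := lt_trans (by positivity) hρt
  have hFpos : 0 < ρ t * (1 + m / (2 * ρ t)) ^ 2 := by positivity
  have hexpr : 0 < 2 * c t * K t - K t ^ 2 / ρ t - m := by
    have hct := hc t ht0
    have h1 : 1 < c t * Real.sqrt 3 := by
      have := mul_lt_mul_of_pos_right hct hs3pos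
      rwa [one_div, inv_mul_cancel₀ (ne_of_gt hs3pos)] at this
    have h2 : K t ^ 2 = 3 * m ^ 2 := by
      rw [hKt, hBdef, mul_pow, hs3]
    have h3 : K t ^ 2 / ρ t < m := by
      rw [h2, div_lt_iff₀ hρtpos]
      nlinarith
    have h4 : 2 * m ≤ 2 * c t * K t := by
      rw [hKt, hBdef]
      nlinarith
    linarith
  have hderiv : 0 < deriv K t := by
    have := hK' t ht0
    have hpos : 0 < (1 / (ρ t * (1 + m / (2 * ρ t)) ^ 2)) *
        (2 * c t * K t - K t ^ 2 / ρ t - m) := by positivity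
    linarith
  -- slope argument: derivative positive at a left-minimum gives contradiction
  have hd : HasDerivAt K (deriv K t) t := (hKdiff t ht0).hasDerivAt
  have hslope := hasDerivAt_iff_tendsto_slope.1 hd
  have hev : ∀ᶠ s in nhdsWithin t {t}ᶜ, 0 < slope K t s :=
    hslope.eventually (eventually_gt_nhds hderiv)
  have hmono : nhdsWithin t (Set.Iio t) ≤ nhdsWithin t {t}ᶜ :=
    nhdsWithin_mono t (fun x hx => ne_of_lt hx)
  have hev2 : ∀ᶠ s in nhdsWithin t (Set.Iio t),
      0 < slope K t s ∧ s ∈ Set.Ioo 0 t := by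
    filter_upwards [hmono hev,
      Ioo_mem_nhdsLT_of_mem (Set.mem_Ioc.2 ⟨htpos, le_refl t⟩)] with s h1 h2
    exact ⟨h1, h2⟩
  obtain ⟨s, hs1, hs2⟩ := hev2.exists
  have hst : s - t < 0 := sub_neg.2 hs2.2
  have hKst : K s - K t < 0 := by
    by_contra h
    push_neg at h
    have : slope K t s ≤ 0 := by
      rw [slope_def_field]
      exact div_nonpos_of_nonneg_of_nonpos (by linarith) (le_of_lt hst)
    linarith
  have : B < K s := hbelow s hs2.1.le hs2.2
  rw [hKt] at hKst
  linarith
end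

section
/- Let F : (0,∞) → (0,∞) be a continuous function, let C₃ > 0 be a constant, and let G₀ ∈ (0,1). Let ρ, c : [0,∞) → ℝ be differentiable functions such that for every s ≥ 0: ρ(s) > 0, 0 < c(s) ≤ 1, ρ'(s) = c(s)/F(ρ(s))², and c'(s) ≥ (√(1 − c(s)²)/(F(ρ(s))²·ρ(s)))·(√(1 − c(s)²) − C₃/ρ(s)). If c(0) > G₀ and ρ(0) > C₃/√(1 − G₀²), then ρ is strictly increasing on [0,∞) and c(s) > G₀ for every s ≥ 0. -/
/-- Tangent-angle barrier for the flow with normal speed `1/F²` in a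
general spherically symmetric static manifold (Proposition 5.2). `F` is a positive
continuous function on `(0,∞)`, `C₃ > 0`, and `G₀ ∈ (0,1)` is a lower barrier for
`cos θ`. Suppose along the flow line `ρ' = c / F(ρ)²` and
`c' ≥ (√(1−c²)/(F(ρ)²ρ))(√(1−c²) − C₃/ρ)`, with `0 < c ≤ 1` and `ρ > 0`.
If `c(0) > G₀` and `ρ(0) > C₃/√(1−G₀²)`, then `ρ` is strictly increasing on `[0,∞)`
and `c(s) > G₀` for all `s ≥ 0`. -/
theorem static_tangent_angle_barrier
    (F : ℝ → ℝ)
    (hFcont : ContinuousOn F (Set.Ioi 0))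
    (hFpos : ∀ x, 0 < x → 0 < F x)
    (C₃ : ℝ) (hC₃ : 0 < C₃)
    (G₀ : ℝ) (hG₀ : 0 < G₀) (hG₀' : G₀ < 1)
    (ρ c : ℝ → ℝ)
    (hρpos : ∀ s, 0 ≤ s → 0 < ρ s)
    (hcpos : ∀ s, 0 ≤ s → 0 < c s)
    (hcle : ∀ s, 0 ≤ s → c s ≤ 1)
    (hρ' : ∀ s, 0 ≤ s → HasDerivAt ρ (c s / (F (ρ s)) ^ 2) s)
    (hcdiff : ∀ s, 0 ≤ s → DifferentiableAt ℝ c s)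
    (hc' : ∀ s, 0 ≤ s → deriv c s ≥
      (Real.sqrt (1 - c s ^ 2) / ((F (ρ s)) ^ 2 * ρ s)) *
        (Real.sqrt (1 - c s ^ 2) - C₃ / ρ s))
    (hc0 : c 0 > G₀)
    (hρ0 : ρ 0 > C₃ / Real.sqrt (1 - G₀ ^ 2)) :
    StrictMonoOn ρ (Set.Ici 0) ∧ ∀ s, 0 ≤ s → c s > G₀ := by
  have hρcont : ContinuousOn ρ (Set.Ici 0) := fun s hs =>
    (hρ' s hs).continuousAt.continuousWithinAt
  have hccont : ContinuousOn c (Set.Ici 0) := fun s hs =>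
    (hcdiff s hs).continuousAt.continuousWithinAt
  have hmono : StrictMonoOn ρ (Set.Ici 0) := by
    apply StrictMonoOn.mono (s := Set.Ici (0:ℝ)) ?_ le_rfl
    apply strictMonoOn_of_deriv_pos (convex_Ici 0) hρcont
    intro x hx
    rw [interior_Ici] at hx
    have hx0 : (0:ℝ) ≤ x := le_of_lt hx
    rw [(hρ' x hx0).deriv]
    exact div_pos (hcpos x hx0) (pow_pos (hFpos _ (hρpos x hx0)) 2)
  refine ⟨hmono, ?_⟩
  by_contra hbad
  push_neg at hbad
  obtain ⟨s₁, hs₁0, hs₁⟩ := hbad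
  set S : Set ℝ := Set.Ici 0 ∩ c ⁻¹' Set.Iic G₀ with hS
  have hSclosed : IsClosed S :=
    hccont.preimage_isClosed_of_isClosed isClosed_Ici isClosed_Iic
  have hSne : S.Nonempty := ⟨s₁, hs₁0, hs₁⟩
  have hSbdd : BddBelow S := ⟨0, fun x hx => hx.1⟩
  set s₀ := sInf S with hs₀def
  have hs₀S : s₀ ∈ S := hSclosed.csInf_mem hSne hSbdd
  have hs₀0 : (0:ℝ) ≤ s₀ := hs₀S.1
  have hcs₀ : c s₀ ≤ G₀ := hs₀S.2
  have hs₀pos : 0 < s₀ := by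
    rcases lt_or_eq_of_le hs₀0 with h | h
    · exact h
    · exact absurd hcs₀ (not_le.mpr (h ▸ hc0))
  -- points strictly before s₀ have c > G₀
  have hbefore : ∀ t, t ∈ Set.Ico (0:ℝ) s₀ → G₀ < c t := by
    intro t ⟨ht0, hts⟩
    by_contra h
    push_neg at h
    exact absurd (csInf_le hSbdd ⟨ht0, h⟩) (not_le.mpr hts)
  -- derivative at s₀ is nonpositive (left slopes are negative)
  have hd : HasDerivWithinAt c (deriv c s₀) (Set.Icc 0 s₀) s₀ :=
    ((hcdiff s₀ hs₀0).hasDerivAt).hasDerivWithinAt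
  have hdiff : Set.Icc (0:ℝ) s₀ \ {s₀} = Set.Ico 0 s₀ := by
    ext x
    simp only [Set.mem_diff, Set.mem_Icc, Set.mem_singleton_iff, Set.mem_Ico]
    constructor
    · rintro ⟨⟨h1, h2⟩, h3⟩; exact ⟨h1, lt_of_le_of_ne h2 h3⟩
    · rintro ⟨h1, h2⟩; exact ⟨⟨h1, le_of_lt h2⟩, ne_of_lt h2⟩
  have hslope : Filter.Tendsto (slope c s₀) (nhdsWithin s₀ (Set.Ico 0 s₀))
      (nhds (deriv c s₀)) := by
    have := hasDerivWithinAt_iff_tendsto_slope.mp hd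
    rwa [hdiff] at this
  have hnebot : (nhdsWithin s₀ (Set.Ico 0 s₀)).NeBot := by
    rw [← mem_closure_iff_nhdsWithin_neBot, closure_Ico (ne_of_lt hs₀pos)]
    exact ⟨hs₀0, le_rfl⟩
  have hderiv_nonpos : deriv c s₀ ≤ 0 := by
    refine le_of_tendsto hslope ?_
    filter_upwards [self_mem_nhdsWithin] with t ht
    have h1 : c s₀ < c t := lt_of_le_of_lt hcs₀ (hbefore t ht)
    have h2 : t - s₀ < 0 := sub_neg.mpr ht.2
    rw [slope_def_field]
    have : (0:ℝ) < c t - c s₀ := sub_pos.mpr h1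
    exact le_of_lt (div_neg_of_pos_of_neg this h2)
  -- but the differential inequality forces deriv c s₀ > 0
  have hρs₀pos : 0 < ρ s₀ := hρpos s₀ hs₀0
  have hρ0pos : 0 < ρ 0 := hρpos 0 le_rfl
  have hρlt : ρ 0 < ρ s₀ := hmono (Set.self_mem_Ici) (Set.mem_Ici.mpr hs₀0) hs₀pos
  have hDpos : 0 < Real.sqrt (1 - G₀ ^ 2) := by
    apply Real.sqrt_pos.mpr
    nlinarith
  have hsqle : Real.sqrt (1 - G₀ ^ 2) ≤ Real.sqrt (1 - c s₀ ^ 2) := by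
    apply Real.sqrt_le_sqrt
    have hcpos' := hcpos s₀ hs₀0
    nlinarith
  have hsqpos : 0 < Real.sqrt (1 - c s₀ ^ 2) := lt_of_lt_of_le hDpos hsqle
  have hC₃lt : C₃ / ρ s₀ < Real.sqrt (1 - G₀ ^ 2) := by
    rw [div_lt_iff₀ hρs₀pos]
    have h1 : C₃ / Real.sqrt (1 - G₀ ^ 2) < ρ s₀ := lt_trans hρ0 hρlt
    rw [div_lt_iff₀ hDpos] at h1
    nlinarith
  have hFpos' : 0 < (F (ρ s₀)) ^ 2 * ρ s₀ :=
    mul_pos (pow_pos (hFpos _ hρs₀pos) 2) hρs₀pos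
  have hRHSpos : 0 < (Real.sqrt (1 - c s₀ ^ 2) / ((F (ρ s₀)) ^ 2 * ρ s₀)) *
      (Real.sqrt (1 - c s₀ ^ 2) - C₃ / ρ s₀) := by
    apply mul_pos (div_pos hsqpos hFpos')
    have : C₃ / ρ s₀ < Real.sqrt (1 - c s₀ ^ 2) := lt_of_lt_of_le hC₃lt hsqle
    linarith
  have := hc' s₀ hs₀0
  linarith
end

section
/- Let F : (0,∞) → (0,∞) be a function and let C > 0 be a constant. Let ρ, c, K : [0,∞) → ℝ be differentiable functions such that for every s ≥ 0: ρ(s) > 0, ρ is nondecreasing, c(s) > 1/√3, and K'(s) ≥ (1/(ρ(s)·F(ρ(s))²))·(2·c(s)·K(s) − K(s)²/ρ(s) − C). If ρ(0) > 3C and K(0) > √3·C, then K(s) > √3·C for every s ≥ 0. -/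
/-- Principal-curvature barrier for the flow with normal speed `1/F²` in a
general spherically symmetric static manifold (Proposition 5.2). `F` is a positive
function on `(0,∞)` and `C > 0` a constant. With `K = κ̃ρ²`, suppose along the flow line
`ρ > 0`, `ρ` is nondecreasing, `c > 1/√3`, and
`K' ≥ (1/(ρ F(ρ)²))(2cK − K²/ρ − C)`. If `ρ(0) > 3C` and `K(0) > √3 C`, then
`K(s) > √3 C` for all `s ≥ 0`. -/
theorem static_principal_curvature_barrier
    (F : ℝ → ℝ) (hFpos : ∀ x, 0 < x → 0 < F x)
    (C : ℝ) (hC : 0 < C)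
    (ρ c K : ℝ → ℝ)
    (hρdiff : ∀ s, 0 ≤ s → DifferentiableAt ℝ ρ s)
    (hcdiff : ∀ s, 0 ≤ s → DifferentiableAt ℝ c s)
    (hKdiff : ∀ s, 0 ≤ s → DifferentiableAt ℝ K s)
    (hρpos : ∀ s, 0 ≤ s → 0 < ρ s)
    (hρmono : MonotoneOn ρ (Set.Ici 0))
    (hc : ∀ s, 0 ≤ s → c s > 1 / Real.sqrt 3)
    (hK' : ∀ s, 0 ≤ s → deriv K s ≥
      (1 / (ρ s * (F (ρ s)) ^ 2)) *
        (2 * c s * K s - K s ^ 2 / ρ s - C))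
    (hρ0 : ρ 0 > 3 * C)
    (hK0 : K 0 > Real.sqrt 3 * C) :
    ∀ s, 0 ≤ s → K s > Real.sqrt 3 * C := by
  set L := Real.sqrt 3 * C with hL
  have hsqrt3 : (0:ℝ) < Real.sqrt 3 := Real.sqrt_pos.mpr (by norm_num)
  have hLpos : 0 < L := mul_pos hsqrt3 hC
  by_contra hcon
  push_neg at hcon
  obtain ⟨s₀, hs₀, hKs₀⟩ := hcon
  set S : Set ℝ := {s | 0 ≤ s ∧ K s ≤ L} with hS
  have hSne : S.Nonempty := ⟨s₀, hs₀, hKs₀⟩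
  have hSbdd : BddBelow S := ⟨0, fun x hx => hx.1⟩
  set t := sInf S with htdef
  have ht0 : 0 ≤ t := le_csInf hSne (fun x hx => hx.1)
  have htcl : t ∈ closure S := csInf_mem_closure hSne hSbdd
  have hKcont : ContinuousAt K t := (hKdiff t ht0).continuousAt
  -- K t ≤ L
  have hKtle : K t ≤ L := by
    have hne : (nhdsWithin t S).NeBot := mem_closure_iff_nhdsWithin_neBot.mp htcl
    have htend : Filter.Tendsto K (nhdsWithin t S) (nhds (K t)) :=
      hKcont.continuousWithinAt
    exact le_of_tendsto htend (eventually_nhdsWithin_of_forall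
      (fun x hx => hx.2))
  -- t > 0
  have htpos : 0 < t := by
    rcases lt_or_eq_of_le ht0 with h | h
    · exact h
    · exfalso; rw [← h] at hKtle; linarith
  -- for 0 ≤ s < t, K s > L
  have hbefore : ∀ x, 0 ≤ x → x < t → L < K x := by
    intro x hx0 hxt
    by_contra hxx
    push_neg at hxx
    exact absurd hxt (not_lt.mpr (csInf_le hSbdd ⟨hx0, hxx⟩))
  -- K t ≥ L
  have hKtge : L ≤ K t := by
    have hne : (nhdsWithin t (Set.Iio t)).NeBot := nhdsLT_neBot t
    have htend : Filter.Tendsto K (nhdsWithin t (Set.Iio t)) (nhds (K t)) :=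
      hKcont.continuousWithinAt
    refine ge_of_tendsto htend ?_
    filter_upwards [Ioo_mem_nhdsLT_of_mem (show t ∈ Set.Ioc 0 t from ⟨htpos, le_refl t⟩)]
      with x hx
    exact (hbefore x hx.1.le hx.2).le
  have hKt : K t = L := le_antisymm hKtle hKtge
  -- deriv K t ≤ 0
  have hderiv_le : deriv K t ≤ 0 := by
    have hd : HasDerivAt K (deriv K t) t := (hKdiff t ht0).hasDerivAt
    have hslope : Filter.Tendsto (slope K t) (nhdsWithin t {t}ᶜ) (nhds (deriv K t)) :=
      hasDerivAt_iff_tendsto_slope.mp hd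
    have hslope' : Filter.Tendsto (slope K t) (nhdsWithin t (Set.Iio t))
        (nhds (deriv K t)) :=
      hslope.mono_left (nhdsWithin_mono t (fun x hx => ne_of_lt hx))
    refine le_of_tendsto hslope' ?_
    filter_upwards [Ioo_mem_nhdsLT_of_mem (show t ∈ Set.Ioc 0 t from ⟨htpos, le_refl t⟩)]
      with x hx
    have h1 : 0 < K x - K t := by
      have := hbefore x hx.1.le hx.2
      rw [hKt]; linarith
    have h2 : x - t < 0 := sub_neg.mpr hx.2
    have : (K x - K t) / (x - t) < 0 := div_neg_of_pos_of_neg h1 h2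
    simpa [slope_def_field, div_eq_div_iff] using this.le
  -- positivity of the right side at t
  have hρt : ρ 0 ≤ ρ t := hρmono (Set.mem_Ici.mpr le_rfl) (Set.mem_Ici.mpr ht0) ht0
  have hρtpos : 0 < ρ t := hρpos t ht0
  have hFt : 0 < F (ρ t) := hFpos _ hρtpos
  have hsq3 : Real.sqrt 3 * Real.sqrt 3 = 3 := Real.mul_self_sqrt (by norm_num)
  have hct : c t > 1 / Real.sqrt 3 := hc t ht0
  have h2cK : 2 * c t * K t > 2 * C := by
    rw [hKt, hL]
    have : c t * (Real.sqrt 3 * C) > (1 / Real.sqrt 3) * (Real.sqrt 3 * C) :=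
      (mul_lt_mul_of_pos_right hct hLpos)
    have heq : (1 / Real.sqrt 3) * (Real.sqrt 3 * C) = C := by
      field_simp
    nlinarith
  have hK2 : K t ^ 2 = 3 * C ^ 2 := by
    rw [hKt, hL]; ring_nf; nlinarith
  have hdivlt : K t ^ 2 / ρ t < C := by
    rw [hK2, div_lt_iff₀ hρtpos]
    nlinarith
  have hexpr : 0 < 2 * c t * K t - K t ^ 2 / ρ t - C := by linarith
  have hfac : 0 < 1 / (ρ t * (F (ρ t)) ^ 2) :=
    one_div_pos.mpr (mul_pos hρtpos (pow_pos hFt 2))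
  have : 0 < deriv K t := lt_of_lt_of_le (mul_pos hfac hexpr) (hK' t ht0)
  linarith
end

section
/- Let m > 0 and define f : ℝ³ \ {0} → ℝ by f(x) = (1 + m/(2|x|))⁻². Then f is twice differentiable on ℝ³ \ {0} and, writing ρ = |x| and F = 1 + m/(2ρ), its Euclidean Hessian satisfies, for every x ≠ 0 and every v ∈ ℝ³: Hess f(x)(v,v) = (m/(ρ³F³))·|v|² − (3m/(ρ³F³))·(1 − m/(2ρF))·⟨v, x/ρ⟩². In particular, since 2ρF = 2ρ + m ≥ m, one has Hess f(x)(v,v) ≤ (m/(ρ³F³))·|v|² ≤ (m/(ρ³F²))·|v|² for every v ∈ ℝ³. -/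
open scoped RealInnerProductSpace

section Aux

variable {E : Type*} [NormedAddCommGroup E] [InnerProductSpace ℝ E]

private lemma hasFDerivAt_norm'' {x : E} (hx : x ≠ 0) :
    HasFDerivAt (fun y : E => ‖y‖) (‖x‖⁻¹ • (innerSL ℝ x : E →L[ℝ] ℝ)) x := by
  have hx0 : (0:ℝ) < ‖x‖ := norm_pos_iff.mpr hx
  have hq : HasFDerivAt (fun y : E => ⟪y, y⟫)
      ((fderivInnerCLM ℝ (x, x)).comp
        ((ContinuousLinearMap.id ℝ E).prod (ContinuousLinearMap.id ℝ E))) x :=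
    (hasFDerivAt_id x).inner ℝ (hasFDerivAt_id x)
  have hqx : ⟪x, x⟫ ≠ 0 := by
    rw [real_inner_self_eq_norm_sq]; positivity
  have hs : HasDerivAt Real.sqrt (1 / (2 * Real.sqrt ⟪x, x⟫)) ⟪x, x⟫ :=
    Real.hasDerivAt_sqrt hqx
  have h2 := HasDerivAt.comp_hasFDerivAt (f := fun y : E => ⟪y,y⟫) x hs hq
  have hfun : (Real.sqrt ∘ fun y : E => ⟪y, y⟫) = fun y : E => ‖y‖ := by
    funext y; exact (norm_eq_sqrt_real_inner y).symm
  rw [hfun] at h2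
  refine h2.congr_fderiv ?_
  symm
  ext v
  have hsq : Real.sqrt ⟪x, x⟫ = ‖x‖ := (norm_eq_sqrt_real_inner x).symm
  simp [hsq, real_inner_comm x v]
  field_simp
  ring

private noncomputable def innerSL' : E →L[ℝ] E →L[ℝ] ℝ := innerSL ℝ

private lemma innerSL'_apply (x y : E) : innerSL' x y = ⟪x, y⟫ := rfl

private lemma psi_hasDerivAt (m : ℝ) {r : ℝ} (hr : 0 < r + m / 2) :
    HasDerivAt (fun s : ℝ => m / (s + m / 2) ^ 3)
      (-(3 * m) / (r + m / 2) ^ 4) r := by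
  have h1 : HasDerivAt (fun s : ℝ => (s + m / 2) ^ 3)
      (3 * (r + m / 2) ^ 2 * 1) r := ((hasDerivAt_id r).add_const (m/2)).pow 3
  have hne : (r + m / 2) ^ 3 ≠ 0 := by positivity
  have h2 := (hasDerivAt_const r m).div h1 hne
  refine h2.congr_deriv ?_
  symm
  rw [div_eq_div_iff (by positivity) (by positivity)]
  ring

private lemma phi_hasDerivAt (m : ℝ) (hm : 0 < m) {r : ℝ} (hr : 0 < r) :
    HasDerivAt (fun s : ℝ => ((1 + m / (2 * s)) ^ 2)⁻¹)
      (m / (r ^ 2 * (1 + m / (2 * r)) ^ 3)) r := by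
  have hF : (0:ℝ) < 1 + m / (2 * r) := by positivity
  have h1 : HasDerivAt (fun s : ℝ => 2 * s) 2 r := by
    simpa using (hasDerivAt_id r).const_mul 2
  have hne : 2 * r ≠ 0 := by positivity
  have h2 := (hasDerivAt_const r m).div h1 hne
  have h3 := (h2.const_add 1).pow 2
  have hne2 : (1 + m / (2 * r)) ^ 2 ≠ 0 := by positivity
  have h4 := h3.inv hne2
  refine h4.congr_deriv ?_
  symm
  simp only [Pi.div_apply, Pi.pow_apply]
  rw [div_eq_div_iff (by positivity) (by positivity), neg_mul]
  norm_num
  field_simp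

private lemma key_hasFDerivAt (m : ℝ) (hm : 0 < m) {x : E} (hx : x ≠ 0) :
    HasFDerivAt (fun y : E => ((1 + m / (2 * ‖y‖)) ^ 2)⁻¹)
      ((m / (‖x‖ + m / 2) ^ 3) • (innerSL ℝ x : E →L[ℝ] ℝ)) x := by
  have hx0 : (0:ℝ) < ‖x‖ := norm_pos_iff.mpr hx
  have hF : (0:ℝ) < 1 + m / (2 * ‖x‖) := by positivity
  have h := HasDerivAt.comp_hasFDerivAt (f := fun y : E => ‖y‖) x
    (phi_hasDerivAt m hm hx0) (hasFDerivAt_norm'' hx)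
  have hfun : ((fun s : ℝ => ((1 + m / (2 * s)) ^ 2)⁻¹) ∘ fun y : E => ‖y‖)
      = fun y : E => ((1 + m / (2 * ‖y‖)) ^ 2)⁻¹ := rfl
  rw [hfun] at h
  refine h.congr_fderiv ?_
  symm
  rw [smul_smul]
  congr 1
  have hxF : ‖x‖ * (1 + m / (2 * ‖x‖)) = ‖x‖ + m / 2 := by field_simp
  have h3 : (‖x‖ + m / 2) ^ 3 = ‖x‖ ^ 3 * (1 + m / (2 * ‖x‖)) ^ 3 := by
    rw [← hxF]; ring
  rw [h3]
  field_simp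

end Aux

/-- Hessian computation for `f(x) = (1 + m/(2|x|))⁻²` on `ℝ³ \ {0}`
(the key computation in the proof of Proposition 5.1). Writing `ρ = |x|` and
`F = 1 + m/(2ρ)`, the function `f` is twice differentiable away from the origin and
`Hess f(x)(v,v) = (m/(ρ³F³))|v|² − (3m/(ρ³F³))(1 − m/(2ρF))⟨v, x/ρ⟩²`; in particular
`Hess f(x)(v,v) ≤ (m/(ρ³F³))|v|² ≤ (m/(ρ³F²))|v|²`. -/
theorem schwarzschild_conformal_hessian
    (m : ℝ) (hm : 0 < m)
    (f : EuclideanSpace ℝ (Fin 3) → ℝ)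
    (hf : ∀ x : EuclideanSpace ℝ (Fin 3), x ≠ 0 →
      f x = ((1 + m / (2 * ‖x‖)) ^ 2)⁻¹) :
    ∀ x : EuclideanSpace ℝ (Fin 3), x ≠ 0 →
      ContDiffAt ℝ 2 f x ∧
      ∀ v : EuclideanSpace ℝ (Fin 3),
        fderiv ℝ (fderiv ℝ f) x v v =
          (m / (‖x‖ ^ 3 * (1 + m / (2 * ‖x‖)) ^ 3)) * ‖v‖ ^ 2
            - (3 * m / (‖x‖ ^ 3 * (1 + m / (2 * ‖x‖)) ^ 3))
              * (1 - m / (2 * ‖x‖ * (1 + m / (2 * ‖x‖))))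
              * ⟪v, ‖x‖⁻¹ • x⟫ ^ 2 ∧
        fderiv ℝ (fderiv ℝ f) x v v ≤
          (m / (‖x‖ ^ 3 * (1 + m / (2 * ‖x‖)) ^ 3)) * ‖v‖ ^ 2 ∧
        fderiv ℝ (fderiv ℝ f) x v v ≤
          (m / (‖x‖ ^ 3 * (1 + m / (2 * ‖x‖)) ^ 2)) * ‖v‖ ^ 2 := by
  intro x hx
  have hx0 : (0:ℝ) < ‖x‖ := norm_pos_iff.mpr hx
  have hF : (0:ℝ) < 1 + m / (2 * ‖x‖) := by positivity
  have ha : (0:ℝ) < ‖x‖ + m / 2 := by positivity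
  have hev_ne : ∀ᶠ y in nhds x, y ≠ (0 : EuclideanSpace ℝ (Fin 3)) := eventually_ne_nhds hx
  have hev_f : f =ᶠ[nhds x]
      fun y : EuclideanSpace ℝ (Fin 3) => ((1 + m / (2 * ‖y‖)) ^ 2)⁻¹ :=
    hev_ne.mono fun y hy => hf y hy
  set g : EuclideanSpace ℝ (Fin 3) → (EuclideanSpace ℝ (Fin 3) →L[ℝ] ℝ) :=
    fun y => (m / (‖y‖ + m / 2) ^ 3) • (innerSL ℝ y) with hg_def
  have hg_ev : fderiv ℝ f =ᶠ[nhds x] g := by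
    filter_upwards [hev_ne] with y hy
    have h1 := key_hasFDerivAt m hm hy
    have h2 : HasFDerivAt f (g y) y :=
      h1.congr_of_eventuallyEq ((eventually_ne_nhds hy).mono fun z hz => hf z hz)
    exact h2.fderiv
  have hn2 : ContDiffAt ℝ 2 (fun y : EuclideanSpace ℝ (Fin 3) => ‖y‖) x :=
    contDiffAt_norm ℝ hx
  have hc1 : ContDiffAt ℝ 2
      (fun y : EuclideanSpace ℝ (Fin 3) => ((1 + m / (2 * ‖y‖)) ^ 2)⁻¹) x := by
    have h1 : ContDiffAt ℝ 2 (fun y : EuclideanSpace ℝ (Fin 3) => m / (2 * ‖y‖)) x :=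
      contDiffAt_const.div (contDiffAt_const.mul hn2) (by positivity)
    exact ((contDiffAt_const.add h1).pow 2).inv (by positivity)
  have hcd : ContDiffAt ℝ 2 f x := hc1.congr_of_eventuallyEq hev_f
  refine ⟨hcd, ?_⟩
  have hpsi := psi_hasDerivAt m (r := ‖x‖) (by linarith)
  have hcoef : HasFDerivAt
      (fun y : EuclideanSpace ℝ (Fin 3) => m / (‖y‖ + m / 2) ^ 3)
      ((-(3 * m) / (‖x‖ + m / 2) ^ 4) • (‖x‖⁻¹ • (innerSL ℝ x))) x :=
    HasDerivAt.comp_hasFDerivAt (f := fun y : EuclideanSpace ℝ (Fin 3) => ‖y‖) x hpsi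
      (hasFDerivAt_norm'' hx)
  have hB : HasFDerivAt (fun y : EuclideanSpace ℝ (Fin 3) => (innerSL ℝ y))
      (innerSL' (E := EuclideanSpace ℝ (Fin 3))) x := innerSL'.hasFDerivAt
  have hg2 : HasFDerivAt g
      ((m / (‖x‖ + m / 2) ^ 3) • innerSL'
        + ((-(3 * m) / (‖x‖ + m / 2) ^ 4) • (‖x‖⁻¹ • (innerSL ℝ x))).smulRight
            (innerSL ℝ x)) x := hcoef.smul hB
  have hsnd : fderiv ℝ (fderiv ℝ f) x =
      (m / (‖x‖ + m / 2) ^ 3) • innerSL'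
        + ((-(3 * m) / (‖x‖ + m / 2) ^ 4) • (‖x‖⁻¹ • (innerSL ℝ x))).smulRight
            (innerSL ℝ x) := by
    rw [hg_ev.fderiv_eq]; exact hg2.fderiv
  intro v
  have happ : fderiv ℝ (fderiv ℝ f) x v v =
      (m / (‖x‖ + m / 2) ^ 3) * ⟪v, v⟫
        + (-(3 * m) / (‖x‖ + m / 2) ^ 4) * (‖x‖⁻¹ * ⟪x, v⟫) * ⟪x, v⟫ := by
    rw [hsnd]
    simp only [ContinuousLinearMap.add_apply, ContinuousLinearMap.smul_apply,
      ContinuousLinearMap.smulRight_apply, smul_eq_mul, innerSL'_apply,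
      innerSL_apply_apply]
  have hvv : ⟪v, v⟫ = ‖v‖ ^ 2 := real_inner_self_eq_norm_sq v
  have hinner : ⟪v, ‖x‖⁻¹ • x⟫ = ‖x‖⁻¹ * ⟪x, v⟫ := by
    rw [real_inner_smul_right, real_inner_comm]
  have hxF : ‖x‖ * (1 + m / (2 * ‖x‖)) = ‖x‖ + m / 2 := by
    field_simp
    try ring
  have h3 : ‖x‖ ^ 3 * (1 + m / (2 * ‖x‖)) ^ 3 = (‖x‖ + m / 2) ^ 3 := by
    rw [← hxF]; ring
  have h2F : 2 * ‖x‖ * (1 + m / (2 * ‖x‖)) = 2 * ‖x‖ + m := by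
    field_simp
    try ring
  have h2m : (0:ℝ) < 2 * ‖x‖ + m := by linarith
  have heq : fderiv ℝ (fderiv ℝ f) x v v =
      (m / (‖x‖ ^ 3 * (1 + m / (2 * ‖x‖)) ^ 3)) * ‖v‖ ^ 2
        - (3 * m / (‖x‖ ^ 3 * (1 + m / (2 * ‖x‖)) ^ 3))
          * (1 - m / (2 * ‖x‖ * (1 + m / (2 * ‖x‖))))
          * ⟪v, ‖x‖⁻¹ • x⟫ ^ 2 := by
    rw [happ, hvv, hinner, h3, h2F]
    have h1 : (‖x‖ + m / 2) ≠ 0 := ne_of_gt ha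
    have h2 : (2 * ‖x‖ + m) ≠ 0 := ne_of_gt h2m
    have h3' : ‖x‖ ≠ 0 := ne_of_gt hx0
    field_simp
    ring
  have h1m : (0:ℝ) ≤ 1 - m / (2 * ‖x‖ * (1 + m / (2 * ‖x‖))) := by
    rw [h2F]
    have : m / (2 * ‖x‖ + m) ≤ 1 := (div_le_one h2m).mpr (by linarith)
    linarith
  have hle1 : fderiv ℝ (fderiv ℝ f) x v v ≤
      (m / (‖x‖ ^ 3 * (1 + m / (2 * ‖x‖)) ^ 3)) * ‖v‖ ^ 2 := by
    rw [heq]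
    have hterm : 0 ≤ (3 * m / (‖x‖ ^ 3 * (1 + m / (2 * ‖x‖)) ^ 3))
        * (1 - m / (2 * ‖x‖ * (1 + m / (2 * ‖x‖)))) * ⟪v, ‖x‖⁻¹ • x⟫ ^ 2 :=
      mul_nonneg (mul_nonneg (by positivity) h1m) (sq_nonneg _)
    linarith
  refine ⟨heq, hle1, hle1.trans ?_⟩
  apply mul_le_mul_of_nonneg_right _ (sq_nonneg ‖v‖)
  have hF1 : (1:ℝ) ≤ 1 + m / (2 * ‖x‖) := by
    have : 0 < m / (2 * ‖x‖) := by positivity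
    linarith
  have hden : ‖x‖ ^ 3 * (1 + m / (2 * ‖x‖)) ^ 2 ≤ ‖x‖ ^ 3 * (1 + m / (2 * ‖x‖)) ^ 3 :=
    mul_le_mul_of_nonneg_left (pow_le_pow_right₀ hF1 (by norm_num)) (by positivity)
  exact div_le_div_of_nonneg_left hm.le (by positivity) hden
end

section
/- Let m > 0 and e ∈ ℝ with e² ≤ m², set r₊ = m + √(m² − e²) and V(r) = √(1 − 2m/r + e²/r²) for r > r₊. Suppose ρ : (r₊, ∞) → (0, ∞) is differentiable and satisfies ρ'(r) = ρ(r)/(r·V(r)) for all r > r₊. Then ρ is strictly increasing, the limit L = lim_{r→∞} ρ(r)/r exists and satisfies 0 < L < ∞, and consequently there exist constants C > c > 0 and r₁ > r₊ such that c·r ≤ ρ(r) ≤ C·r for all r ≥ r₁. -/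
open Filter

/-- The isothermal radial coordinate of the Reissner–Nordstrom manifold
of mass `m > 0` and charge `e` with `e² ≤ m²`: if `ρ` is positive on `(r₊, ∞)` and
solves `ρ' = ρ/(rV(r))` there, where `V(r) = √(1 − 2m/r + e²/r²)` and
`r₊ = m + √(m² − e²)`, then `ρ` is strictly increasing, `ρ(r)/r` tends to a finite
positive limit `L` as `r → ∞`, and consequently `c·r ≤ ρ(r) ≤ C·r` for some
constants `C > c > 0` and all sufficiently large `r`. -/
theorem reissner_nordstrom_isothermal_radius_comparable
    (m e : ℝ) (hm : 0 < m) (he : e ^ 2 ≤ m ^ 2)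
    (rp : ℝ) (hrp : rp = m + Real.sqrt (m ^ 2 - e ^ 2))
    (V : ℝ → ℝ) (hV : ∀ r, V r = Real.sqrt (1 - 2 * m / r + e ^ 2 / r ^ 2))
    (ρ : ℝ → ℝ)
    (hρpos : ∀ r, rp < r → 0 < ρ r)
    (hρ' : ∀ r, rp < r → HasDerivAt ρ (ρ r / (r * V r)) r) :
    StrictMonoOn ρ (Set.Ioi rp) ∧
      (∃ L : ℝ, 0 < L ∧ Tendsto (fun r => ρ r / r) atTop (nhds L)) ∧
      ∃ C c r₁ : ℝ, 0 < c ∧ c < C ∧ rp < r₁ ∧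
        ∀ r, r₁ ≤ r → c * r ≤ ρ r ∧ ρ r ≤ C * r := by
  have hm2e2 : (0:ℝ) ≤ m ^ 2 - e ^ 2 := by linarith
  set s := Real.sqrt (m ^ 2 - e ^ 2) with hsdef
  have hs0 : 0 ≤ s := Real.sqrt_nonneg _
  have hs2 : s ^ 2 = m ^ 2 - e ^ 2 := Real.sq_sqrt hm2e2
  have hrpm : m ≤ rp := by rw [hrp]; linarith
  have hrp0 : 0 < rp := lt_of_lt_of_le hm hrpm
  -- basic facts for r > rp
  have hQpos : ∀ r, rp < r → 0 < 1 - 2 * m / r + e ^ 2 / r ^ 2 := by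
    intro r hr
    have hr0 : 0 < r := lt_trans hrp0 hr
    have hrs : m + s < r := by rw [hrp] at hr; linarith
    have key : 0 < r ^ 2 - 2 * m * r + e ^ 2 := by nlinarith
    have : 1 - 2 * m / r + e ^ 2 / r ^ 2 = (r ^ 2 - 2 * m * r + e ^ 2) / r ^ 2 := by
      field_simp
    rw [this]
    positivity
  have hVpos : ∀ r, rp < r → 0 < V r := by
    intro r hr; rw [hV]; exact Real.sqrt_pos.2 (hQpos r hr)
  have hVsq : ∀ r, rp < r → V r ^ 2 = 1 - 2 * m / r + e ^ 2 / r ^ 2 := by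
    intro r hr; rw [hV]; exact Real.sq_sqrt (hQpos r hr).le
  -- strict monotonicity
  have hmono : StrictMonoOn ρ (Set.Ioi rp) := by
    apply strictMonoOn_of_deriv_pos (convex_Ioi rp)
    · intro x hx
      exact (hρ' x hx).continuousAt.continuousWithinAt
    · intro x hx
      rw [interior_Ioi] at hx
      rw [(hρ' x hx).deriv]
      have hx0 : 0 < x := lt_trans hrp0 hx
      have := hρpos x hx
      have := hVpos x hx
      positivity
  refine ⟨hmono, ?_⟩
  -- log quotient
  set g : ℝ → ℝ := fun r => Real.log (ρ r) - Real.log r with hgdef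
  have hg' : ∀ r, rp < r → HasDerivAt g (1 / (r * V r) - 1 / r) r := by
    intro r hr
    have hr0 : 0 < r := lt_trans hrp0 hr
    have hρ0 := hρpos r hr
    have hV0 := hVpos r hr
    have h1 : HasDerivAt (fun y => Real.log (ρ y) - Real.log y) (ρ r / (r * V r) / ρ r - r⁻¹) r := ((hρ' r hr).log hρ0.ne').sub (Real.hasDerivAt_log hr0.ne')
    convert h1 using 1
    field_simp
  -- choose r₀
  obtain ⟨r₀, hr₀rp, hr₀4m, hr₀e⟩ :
      ∃ r₀, rp < r₀ ∧ 4 * m ≤ r₀ ∧ e ^ 2 / (2 * m) ≤ r₀ := by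
    refine ⟨rp + 4 * m + e ^ 2 / (2 * m) + 1, ?_, ?_, ?_⟩ <;>
      have he2m : (0:ℝ) ≤ e ^ 2 / (2 * m) := by positivity
    · linarith
    · linarith
    · linarith
  have hr₀0 : 0 < r₀ := lt_trans hrp0 hr₀rp
  -- bounds for V on [r₀, ∞)
  have hV1 : ∀ x, r₀ ≤ x → V x ≤ 1 := by
    intro x hx
    have hxrp : rp < x := lt_of_lt_of_le hr₀rp hx
    have hx0 : 0 < x := lt_trans hrp0 hxrp
    rw [hV]
    apply Real.sqrt_le_one.2
    have h1 : e ^ 2 ≤ 2 * m * x := by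
      have := (div_le_iff₀ (by positivity : (0:ℝ) < 2 * m)).1 (le_trans hr₀e hx)
      linarith
    have : e ^ 2 / x ^ 2 ≤ 2 * m / x := by
      rw [div_le_div_iff₀ (by positivity) hx0]
      nlinarith
    linarith
  have hVh : ∀ x, r₀ ≤ x → 1 / 2 ≤ V x := by
    intro x hx
    have hxrp : rp < x := lt_of_lt_of_le hr₀rp hx
    have hx0 : 0 < x := lt_trans hrp0 hxrp
    rw [hV]
    rw [show (1:ℝ)/2 = Real.sqrt (1/4) by
      rw [show (1:ℝ)/4 = (1/2)^2 by norm_num, Real.sqrt_sq (by norm_num)]]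
    apply Real.sqrt_le_sqrt
    have h2m : 2 * m / x ≤ 1 / 2 := by
      rw [div_le_div_iff₀ hx0 (by norm_num : (0:ℝ) < 2)]
      linarith [le_trans hr₀4m hx]
    have : (0:ℝ) ≤ e ^ 2 / x ^ 2 := by positivity
    linarith
  -- derivative bound
  have hDle : ∀ x, r₀ ≤ x → 1 / (x * V x) - 1 / x ≤ 4 * m / x ^ 2 := by
    intro x hx
    have hxrp : rp < x := lt_of_lt_of_le hr₀rp hx
    have hx0 : 0 < x := lt_trans hrp0 hxrp
    have hV0 := hVpos x hxrp
    have h1 : V x ≤ 1 := hV1 x hx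
    have h2 : 1 / 2 ≤ V x := hVh x hx
    have hsq : x ^ 2 * V x ^ 2 = x ^ 2 - 2 * m * x + e ^ 2 := by
      rw [hVsq x hxrp]; field_simp
    have e1 : 1 / (x * V x) - 1 / x = (1 - V x) / (x * V x) := by
      field_simp
    rw [e1, div_le_div_iff₀ (by positivity) (by positivity)]
    nlinarith [mul_nonneg (mul_nonneg (sub_nonneg.2 h1) hV0.le) (sq_nonneg x),
      mul_nonneg (by positivity : (0:ℝ) ≤ 4 * m * x) (by linarith : (0:ℝ) ≤ V x - 1/2),
      sq_nonneg e]
  have hDge : ∀ x, r₀ ≤ x → 0 ≤ 1 / (x * V x) - 1 / x := by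
    intro x hx
    have hxrp : rp < x := lt_of_lt_of_le hr₀rp hx
    have hx0 : 0 < x := lt_trans hrp0 hxrp
    have hV0 := hVpos x hxrp
    have h1 : x * V x ≤ x := by nlinarith [hV1 x hx]
    have := one_div_le_one_div_of_le (by positivity) h1
    linarith
  -- g is monotone on Ici r₀
  have hgmono : MonotoneOn g (Set.Ici r₀) := by
    apply monotoneOn_of_deriv_nonneg (convex_Ici r₀)
    · intro x hx
      exact (hg' x (lt_of_lt_of_le hr₀rp hx)).continuousAt.continuousWithinAt
    · intro x hx
      rw [interior_Ici] at hx
      exact (hg' x (lt_trans hr₀rp hx)).differentiableAt.differentiableWithinAt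
    · intro x hx
      rw [interior_Ici] at hx
      rw [(hg' x (lt_trans hr₀rp hx)).deriv]
      exact hDge x hx.le
  -- h = g + 4m/r is antitone on Ici r₀
  set h : ℝ → ℝ := fun r => g r + 4 * m / r with hhdef
  have hh' : ∀ x, rp < x → HasDerivAt h (1 / (x * V x) - 1 / x + (4 * m) * (-(x ^ 2)⁻¹)) x := by
    intro x hx
    have hx0 : 0 < x := lt_trans hrp0 hx
    have hinv : HasDerivAt (fun r : ℝ => 4 * m / r) (4 * m * (-(x ^ 2)⁻¹)) x := by
      simpa [div_eq_mul_inv] using (hasDerivAt_inv hx0.ne').const_mul (4 * m)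
    exact (hg' x hx).add hinv
  have hhanti : AntitoneOn h (Set.Ici r₀) := by
    apply antitoneOn_of_deriv_nonpos (convex_Ici r₀)
    · intro x hx
      exact (hh' x (lt_of_lt_of_le hr₀rp hx)).continuousAt.continuousWithinAt
    · intro x hx
      rw [interior_Ici] at hx
      exact (hh' x (lt_trans hr₀rp hx)).differentiableAt.differentiableWithinAt
    · intro x hx
      rw [interior_Ici] at hx
      rw [(hh' x (lt_trans hr₀rp hx)).deriv]
      have := hDle x hx.le
      have hx0 : 0 < x := lt_trans hrp0 (lt_trans hr₀rp hx)
      have : (4 * m) * (-(x ^ 2)⁻¹) = -(4 * m / x ^ 2) := by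
        field_simp
      linarith [hDle x hx.le, this ▸ le_refl ((4 * m) * (-(x ^ 2)⁻¹))]
  -- g bounded above on Ici r₀
  have hgbdd : ∀ y, r₀ ≤ y → g y ≤ g r₀ + 4 * m / r₀ := by
    intro y hy
    have hy0 : 0 < y := lt_of_lt_of_le hr₀0 hy
    have h1 : h y ≤ h r₀ := hhanti (Set.self_mem_Ici) hy hy
    have h2 : 0 < 4 * m / y := by positivity
    simp only [hhdef] at h1
    linarith
  -- the limit of g
  set G : ℝ → ℝ := fun r => g (max r r₀) with hGdef
  have hGmono : Monotone G := by
    intro a b hab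
    exact hgmono (le_max_right a r₀) (le_max_right b r₀) (max_le_max hab le_rfl)
  have hGbdd : BddAbove (Set.range G) := by
    refine ⟨g r₀ + 4 * m / r₀, ?_⟩
    rintro _ ⟨r, rfl⟩
    exact hgbdd _ (le_max_right r r₀)
  have hGtend := tendsto_atTop_ciSup hGmono hGbdd
  set L' : ℝ := ⨆ r, G r with hL'def
  have hgtend : Tendsto g atTop (nhds L') := by
    apply hGtend.congr'
    filter_upwards [eventually_ge_atTop r₀] with r hr
    simp [hGdef, max_eq_left hr]
  have hexp : Tendsto (fun r => Real.exp (g r)) atTop (nhds (Real.exp L')) :=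
    (Real.continuous_exp.tendsto _).comp hgtend
  have hrat : Tendsto (fun r => ρ r / r) atTop (nhds (Real.exp L')) := by
    apply hexp.congr'
    filter_upwards [eventually_gt_atTop rp] with r hr
    have hr0 : 0 < r := lt_trans hrp0 hr
    simp only [hgdef]
    rw [Real.exp_sub, Real.exp_log (hρpos r hr), Real.exp_log hr0]
  set L : ℝ := Real.exp L' with hLdef
  have hL : 0 < L := Real.exp_pos _
  refine ⟨⟨L, hL, hrat⟩, ?_⟩
  -- extract bounds
  have hev : ∀ᶠ r in atTop, ρ r / r ∈ Set.Ioo (L / 2) (2 * L) :=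
    hrat.eventually (Ioo_mem_nhds (by linarith) (by linarith))
  rw [eventually_atTop] at hev
  obtain ⟨a, ha⟩ := hev
  refine ⟨2 * L, L / 2, max a (rp + 1), by linarith, by linarith, ?_, ?_⟩
  · exact lt_of_lt_of_le (by linarith) (le_max_right a (rp + 1))
  · intro r hr
    have hrrp : rp < r := by
      have := le_trans (le_max_right a (rp + 1)) hr; linarith
    have hr0 : 0 < r := lt_trans hrp0 hrrp
    have hio := ha r (le_trans (le_max_left a (rp + 1)) hr)
    constructor
    · have := (lt_div_iff₀ hr0).1 hio.1
      linarith
    · have := (div_lt_iff₀ hr0).1 hio.2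
      linarith
end

section
/- Let m > 0 and e ∈ ℝ with e² ≤ m², set r₊ = m + √(m² − e²) and V(r) = √(1 − 2m/r + e²/r²) for r > r₊. Suppose ρ : (r₊, ∞) → (0, ∞) is differentiable and satisfies ρ'(r) = ρ(r)/(r·V(r)) for all r > r₊. Then the function r ↦ r/ρ(r) is strictly decreasing on (r₊, ∞). Equivalently, the conformal factor F, defined by F² = r/ρ as a function of the isothermal radius ρ, satisfies ∂F/∂ρ < 0. -/
/-- For the isothermal radial coordinate `ρ` of the Reissner–Nordstrom
manifold of mass `m > 0` and charge `e` with `e² ≤ m²` (so `ρ' = ρ/(rV(r))` on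
`(r₊, ∞)`, where `V(r) = √(1 − 2m/r + e²/r²)` and `r₊ = m + √(m² − e²)`), the
function `r ↦ r/ρ(r)` is strictly decreasing on `(r₊, ∞)`; equivalently, the
conformal factor `F` with `F² = r/ρ` satisfies `∂F/∂ρ < 0`. -/
theorem reissner_nordstrom_conformal_factor_decreasing
    (m e : ℝ) (hm : 0 < m) (he : e ^ 2 ≤ m ^ 2)
    (rp : ℝ) (hrp : rp = m + Real.sqrt (m ^ 2 - e ^ 2))
    (V : ℝ → ℝ) (hV : ∀ r, V r = Real.sqrt (1 - 2 * m / r + e ^ 2 / r ^ 2))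
    (ρ : ℝ → ℝ)
    (hρpos : ∀ r, rp < r → 0 < ρ r)
    (hρ' : ∀ r, rp < r → HasDerivAt ρ (ρ r / (r * V r)) r) :
    StrictAntiOn (fun r => r / ρ r) (Set.Ioi rp) := by
  set s := Real.sqrt (m ^ 2 - e ^ 2) with hsdef
  have hs0 : 0 ≤ s := Real.sqrt_nonneg _
  have hs2 : s ^ 2 = m ^ 2 - e ^ 2 := Real.sq_sqrt (by linarith)
  have key : ∀ r, rp < r →
      HasDerivAt (fun r => r / ρ r) ((1 * ρ r - r * (ρ r / (r * V r))) / ρ r ^ 2) r ∧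
      (1 * ρ r - r * (ρ r / (r * V r))) / ρ r ^ 2 < 0 := by
    intro r hr
    have hrps : rp = m + s := hrp
    have hrm : m + s < r := by rw [← hrps]; exact hr
    have hr0 : 0 < r := by linarith
    have hρr : 0 < ρ r := hρpos r hr
    have h1 : 0 < r - m - s := by linarith
    have h2 : 0 < r - m + s := by linarith
    have hq : 0 < r ^ 2 - 2 * m * r + e ^ 2 := by nlinarith [mul_pos h1 h2]
    have hq1 : r ^ 2 - 2 * m * r + e ^ 2 < r ^ 2 := by nlinarith
    have hx : 1 - 2 * m / r + e ^ 2 / r ^ 2 = (r ^ 2 - 2 * m * r + e ^ 2) / r ^ 2 := by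
      field_simp
    have hx0 : 0 < 1 - 2 * m / r + e ^ 2 / r ^ 2 := by
      rw [hx]; positivity
    have hx1 : 1 - 2 * m / r + e ^ 2 / r ^ 2 < 1 := by
      rw [hx]; rw [div_lt_one (by positivity)]; linarith
    have hV0 : 0 < V r := by rw [hV]; exact Real.sqrt_pos.mpr hx0
    have hV1 : V r < 1 := by
      rw [hV]
      calc Real.sqrt (1 - 2 * m / r + e ^ 2 / r ^ 2)
          < Real.sqrt 1 := Real.sqrt_lt_sqrt (le_of_lt hx0) hx1
        _ = 1 := Real.sqrt_one
    constructor
    · exact (hasDerivAt_id r).div (hρ' r hr) (ne_of_gt hρr)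
    · have hsimp : r * (ρ r / (r * V r)) = ρ r / V r := by
        field_simp
      rw [hsimp, one_mul]
      apply div_neg_of_neg_of_pos _ (by positivity)
      have : ρ r < ρ r / V r := by
        rw [lt_div_iff₀ hV0]; nlinarith
      linarith
  apply strictAntiOn_of_deriv_neg (convex_Ioi rp)
  · intro r hr
    exact ((key r hr).1).continuousAt.continuousWithinAt
  · intro r hr
    rw [interior_Ioi] at hr
    rw [(key r hr).1.deriv]
    exact (key r hr).2
end
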